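/- Let C be the cycle graph of length n and let π be a partition of its vertex set. Then the quotient multigraph C^π is a cactus if and only if π is non-crossing. -/

import Mathlib

set_option autoImplicit false

/-! ## Multigraphs -/

/-- A multigraph: a vertex type `V`, an edge type `E`, and an assignment to each edge of
its unordered pair of endpoints.  Loops and parallel edges are allowed. -/
structure Multigraph (V E : Type) where
  ends : E → Sym2 V

namespace Multigraph

variable {V E : Type}

/-- `G.ReachAvoid F u v` : `v` can be reached from `u` by a walk using no edge of `F`. -/
inductive ReachAvoid (G : Multigraph V E) (F : Set E) : V → V → Prop
  | refl (v : V) : ReachAvoid G F v v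
  | tail {u v w : V} (e : E) (he : e ∉ F) (hvw : G.ends e = s(v, w))
      (h : ReachAvoid G F u v) : ReachAvoid G F u w

/-- A multigraph is connected if any two vertices are joined by a walk. -/
def Connected (G : Multigraph V E) : Prop := ∀ u v : V, G.ReachAvoid ∅ u v

/-- `F` is a set of edges whose deletion disconnects `v` from `w`. -/
def IsEdgeCut (G : Multigraph V E) (v w : V) (F : Set E) : Prop := ¬ G.ReachAvoid F v w

/-- Edge connectivity `λ(v, w)`: the minimum number of edges whose deletion
disconnects `v` from `w`. -/
noncomputable def edgeConn (G : Multigraph V E) (v w : V) : ℕ :=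
  sInf {k : ℕ | ∃ F : Finset E, F.card = k ∧ G.IsEdgeCut v w ↑F}

/-- Walks in a multigraph, recorded together with the edges they traverse. -/
inductive Walk (G : Multigraph V E) : V → V → Type
  | nil (v : V) : Walk G v v
  | cons {u v w : V} (e : E) (huv : G.ends e = s(u, v)) (p : Walk G v w) : Walk G u w

namespace Walk

variable {G : Multigraph V E}

/-- The list of edges traversed by a walk. -/
def edges : ∀ {u v : V}, G.Walk u v → List E
  | _, _, .nil _ => []
  | _, _, .cons e _ p => e :: edges p

/-- The list of vertices visited by a walk (including both endpoints). -/
def verts : ∀ {u v : V}, G.Walk u v → List V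
  | _, v, .nil _ => [v]
  | u, _, .cons _ _ p => u :: verts p

/-- A walk is a path if it visits no vertex twice. -/
def IsPath {u v : V} (p : G.Walk u v) : Prop := p.verts.Nodup

end Walk

/-- `S` is the edge set of a simple cycle of `G`: a nonempty closed walk with no repeated
edges and no repeated vertices (other than the final return to the starting point).
A loop is a simple cycle of length one. -/
def IsSimpleCycleOn [DecidableEq E] (G : Multigraph V E) (S : Finset E) : Prop :=
  ∃ (v : V) (p : G.Walk v v),
    p.edges ≠ [] ∧ p.edges.Nodup ∧ p.verts.dropLast.Nodup ∧ p.edges.toFinset = S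

/-- A cactus: a connected multigraph in which every edge lies on exactly one simple cycle
(simple cycles being identified with their edge sets). -/
def IsCactus [DecidableEq E] (G : Multigraph V E) : Prop :=
  G.Connected ∧ ∀ e : E, ∃! S : Finset E, G.IsSimpleCycleOn S ∧ e ∈ S

/-- Two-edge-connected: connected, and still connected after deleting any single edge. -/
def TwoEdgeConnected (G : Multigraph V E) : Prop :=
  G.Connected ∧ ∀ (e : E) (u v : V), G.ReachAvoid {e} u v

/-- The quotient multigraph by a partition (setoid) of the vertices: the vertices are the
blocks, and each edge joins the blocks of its original endpoints. -/
def quot (G : Multigraph V E) (σ : Setoid V) : Multigraph (Quotient σ) E :=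
  ⟨fun e => (G.ends e).map (Quotient.mk σ)⟩

/-- Degree of a vertex: the number of edge-incidences at it (loops count twice). -/
def degree [DecidableEq V] [Fintype E] (G : Multigraph V E) (v : V) : ℕ :=
  ∑ e : E,
    Sym2.lift
      ⟨fun a b => (if a = v then 1 else 0) + (if b = v then 1 else 0),
        fun _ _ => add_comm _ _⟩ (G.ends e)

/-- A leaf is a vertex of degree one. -/
def IsLeaf [DecidableEq V] [Fintype E] (G : Multigraph V E) (v : V) : Prop :=
  G.degree v = 1

/-- A tree: a connected multigraph with no simple cycles. -/
def IsTree [DecidableEq E] (G : Multigraph V E) : Prop :=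
  G.Connected ∧ ∀ S : Finset E, ¬ G.IsSimpleCycleOn S

end Multigraph

/-- An embedding of the multigraph `H` into `G`, realizing `H` as a subgraph of `G`. -/
structure Multigraph.Embedding {W F V E : Type} (H : Multigraph W F) (G : Multigraph V E) where
  vmap : W → V
  emap : F → E
  vmap_inj : Function.Injective vmap
  emap_inj : Function.Injective emap
  ends_map : ∀ f : F, G.ends (emap f) = (H.ends f).map vmap

/-! ## Multidigraphs -/

/-- A multidigraph: vertex type `V`, edge type `E`, and source and target maps. -/
structure Multidigraph (V E : Type) where
  src : E → V
  tgt : E → V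

namespace Multidigraph

variable {V E : Type}

/-- The underlying multigraph of a multidigraph. -/
def toMultigraph (D : Multidigraph V E) : Multigraph V E :=
  ⟨fun e => s(D.src e, D.tgt e)⟩

/-- Directed walks in a multidigraph. -/
inductive DiWalk (D : Multidigraph V E) : V → V → Type
  | nil (v : V) : DiWalk D v v
  | cons {u v w : V} (e : E) (hs : D.src e = u) (ht : D.tgt e = v)
      (p : DiWalk D v w) : DiWalk D u w

namespace DiWalk

variable {D : Multidigraph V E}

/-- The list of edges traversed by a directed walk. -/
def edges : ∀ {u v : V}, D.DiWalk u v → List E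
  | _, _, .nil _ => []
  | _, _, .cons e _ _ p => e :: edges p

/-- The list of vertices visited by a directed walk. -/
def verts : ∀ {u v : V}, D.DiWalk u v → List V
  | _, v, .nil _ => [v]
  | u, _, .cons _ _ _ p => u :: verts p

end DiWalk

/-- `S` is the edge set of a simple directed cycle of `D`. -/
def IsDiCycleOn [DecidableEq E] (D : Multidigraph V E) (S : Finset E) : Prop :=
  ∃ (v : V) (p : D.DiWalk v v),
    p.edges ≠ [] ∧ p.edges.Nodup ∧ p.verts.dropLast.Nodup ∧ p.edges.toFinset = S

/-- An oriented cactus: the underlying multigraph is a cactus and each of its simple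
cycles (pads) is a directed cycle. -/
def IsOrientedCactus [DecidableEq E] (D : Multidigraph V E) : Prop :=
  D.toMultigraph.IsCactus ∧
    ∀ S : Finset E, D.toMultigraph.IsSimpleCycleOn S → D.IsDiCycleOn S

/-- The quotient multidigraph by a partition (setoid) of the vertices. -/
def quot (D : Multidigraph V E) (σ : Setoid V) : Multidigraph (Quotient σ) E where
  src := fun e => Quotient.mk σ (D.src e)
  tgt := fun e => Quotient.mk σ (D.tgt e)

/-- Indegree of a vertex: the number of edges with target `v`. -/
def indeg [DecidableEq V] [Fintype E] (D : Multidigraph V E) (v : V) : ℕ :=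
  (Finset.univ.filter fun e => D.tgt e = v).card

/-- Outdegree of a vertex: the number of edges with source `v`. -/
def outdeg [DecidableEq V] [Fintype E] (D : Multidigraph V E) (v : V) : ℕ :=
  (Finset.univ.filter fun e => D.src e = v).card

end Multidigraph

/-- An embedding of the multidigraph `H` into `G`, realizing `H` as a subgraph of `G`. -/
structure Multidigraph.Embedding {W F V E : Type}
    (H : Multidigraph W F) (G : Multidigraph V E) where
  vmap : W → V
  emap : F → E
  vmap_inj : Function.Injective vmap
  emap_inj : Function.Injective emap
  src_map : ∀ f : F, G.src (emap f) = vmap (H.src f)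
  tgt_map : ∀ f : F, G.tgt (emap f) = vmap (H.tgt f)

/-! ## Cycle graphs and non-crossing partitions -/

/-- The cycle graph of length `n`: vertices `Fin n`, edges `Fin n`, edge `i` joining
`v i` and `v (i+1)` (indices mod `n`). -/
def cycleGraph (n : ℕ) [NeZero n] : Multigraph (Fin n) (Fin n) :=
  ⟨fun i => s(i, i + 1)⟩

/-- The cycle graph of length `n` in which each edge carries an orientation:
edge `i` is oriented counterclockwise (from `v i` to `v (i+1)`) if `orient i = true`,
and clockwise otherwise. -/
def cycleDigraph (n : ℕ) [NeZero n] (orient : Fin n → Bool) : Multidigraph (Fin n) (Fin n) where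
  src := fun i => if orient i then i else i + 1
  tgt := fun i => if orient i then i + 1 else i

/-- A relation (e.g. a partition) on `Fin m` is non-crossing if there are no indices
`i₁ < i₂ < i₃ < i₄` with `i₁, i₃` in one block and `i₂, i₄` in a different block. -/
def NonCrossingRel {m : ℕ} (r : Fin m → Fin m → Prop) : Prop :=
  ¬ ∃ i₁ i₂ i₃ i₄ : Fin m, i₁ < i₂ ∧ i₂ < i₃ ∧ i₃ < i₄ ∧ r i₁ i₃ ∧ r i₂ i₄ ∧ ¬ r i₁ i₂

/-- The union of a partition `σ` of the vertices `v₁, …, vₙ` (at the even positions) and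
a partition `κ` of the edges `e₁, …, eₙ` (at the odd positions) of a cycle, as a relation
on the `2n` interlaced points `v₁, e₁, v₂, e₂, …, vₙ, eₙ`. -/
def interRel {n : ℕ} (σ κ : Setoid (Fin n)) (x y : Fin (2 * n)) : Prop :=
  (x.val % 2 = 0 ∧ y.val % 2 = 0 ∧
    σ.r ⟨x.val / 2, by have := x.isLt; omega⟩ ⟨y.val / 2, by have := y.isLt; omega⟩) ∨
  (x.val % 2 = 1 ∧ y.val % 2 = 1 ∧
    κ.r ⟨x.val / 2, by have := x.isLt; omega⟩ ⟨y.val / 2, by have := y.isLt; omega⟩)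

/-- `κ` is the Kreweras complement of `σ`: the largest partition of the edges such that
the union `σ ∪ κ` is non-crossing with respect to the interlaced (cyclic) order. -/
def IsKrewerasComplement {n : ℕ} (σ κ : Setoid (Fin n)) : Prop :=
  NonCrossingRel (interRel σ κ) ∧
    ∀ κ' : Setoid (Fin n), NonCrossingRel (interRel σ κ') → κ' ≤ κ

open Classical in
/-- The block of the partition `κ` containing `i`, as a finite set. -/
noncomputable def setoidClass {n : ℕ} (κ : Setoid (Fin n)) (i : Fin n) : Finset (Fin n) :=
  Finset.univ.filter fun j => κ.r i j

open Fin.NatCast in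
/-- `j` is the next element of `B` encountered strictly after `i` in the cyclic order of
`Fin n` (if `B = {i}` then `j = i` itself, one full turn later). -/
def CyclicNextIn {n : ℕ} [NeZero n] (B : Finset (Fin n)) (i j : Fin n) : Prop :=
  i ∈ B ∧ j ∈ B ∧ ∃ d : ℕ, 0 < d ∧ d ≤ n ∧ j = i + (d : Fin n) ∧
    ∀ d' : ℕ, 0 < d' → d' < d → i + (d' : Fin n) ∉ B

/-! ## Wedges of two (di)graphs at their roots -/

/-- The canonical map from the vertices of `t'` into the wedge vertex type
`V ⊕ {x : V' // x ≠ ρ'}`, sending the root `ρ'` to (the image of) `ρ`. -/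
def wedgeJ {V V' : Type} [DecidableEq V'] (ρ : V) (ρ' : V') :
    V' → V ⊕ {x : V' // x ≠ ρ'} :=
  fun x => if h : x = ρ' then Sum.inl ρ else Sum.inr ⟨x, h⟩

/-- The wedge of two multigraphs `t`, `t'` obtained by identifying `ρ ∈ t` with `ρ' ∈ t'`. -/
def Multigraph.wedge {V E V' E' : Type} [DecidableEq V']
    (t : Multigraph V E) (t' : Multigraph V' E') (ρ : V) (ρ' : V') :
    Multigraph (V ⊕ {x : V' // x ≠ ρ'}) (E ⊕ E') :=
  ⟨fun e =>
    match e with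
    | Sum.inl e => (t.ends e).map Sum.inl
    | Sum.inr e => (t'.ends e).map (wedgeJ ρ ρ')⟩

/-- The wedge of two multidigraphs `t`, `t'` obtained by identifying `ρ ∈ t` with `ρ' ∈ t'`. -/
def Multidigraph.wedge {V E V' E' : Type} [DecidableEq V']
    (t : Multidigraph V E) (t' : Multidigraph V' E') (ρ : V) (ρ' : V') :
    Multidigraph (V ⊕ {x : V' // x ≠ ρ'}) (E ⊕ E') where
  src := fun e =>
    match e with
    | Sum.inl e => Sum.inl (t.src e)
    | Sum.inr e => wedgeJ ρ ρ' (t'.src e)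
  tgt := fun e =>
    match e with
    | Sum.inl e => Sum.inl (t.tgt e)
    | Sum.inr e => wedgeJ ρ ρ' (t'.tgt e)

/-! ## Flowers (a cycle with graphs attached) and stars (trees wedged at a common root) -/

/-- The canonical map from the vertices of the `i`-th attached graph into the flower,
sending the basepoint `b i` to the cycle vertex `i`. -/
def flowerJ {n : ℕ} {W : Fin n → Type} [∀ i, DecidableEq (W i)]
    (b : ∀ i, W i) (i : Fin n) :
    W i → Fin n ⊕ (Σ i, {x : W i // x ≠ b i}) :=
  fun x => if h : x = b i then Sum.inl i else Sum.inr ⟨i, x, h⟩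

/-- The flower: a cycle of length `n` with the multigraph `d i` attached at the cycle
vertex `i` via its basepoint `b i`; the attached graphs are disjoint except through the
cycle, and `d i` meets the cycle exactly in the vertex `i`. -/
def flowerGraph {n : ℕ} [NeZero n] {W F : Fin n → Type} [∀ i, DecidableEq (W i)]
    (d : ∀ i, Multigraph (W i) (F i)) (b : ∀ i, W i) :
    Multigraph (Fin n ⊕ (Σ i, {x : W i // x ≠ b i})) (Fin n ⊕ (Σ i, F i)) :=
  ⟨fun e =>
    match e with
    | Sum.inl k => s(Sum.inl k, Sum.inl (k + 1))
    | Sum.inr ⟨i, f⟩ => ((d i).ends f).map (flowerJ b i)⟩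

/-- The canonical map from the vertices of the `i`-th tree into the star, sending the
root `r i` to the common amalgamated root. -/
def starJ {n : ℕ} {W : Fin n → Type} [∀ i, DecidableEq (W i)]
    (r : ∀ i, W i) (i : Fin n) :
    W i → Unit ⊕ (Σ i, {x : W i // x ≠ r i}) :=
  fun x => if h : x = r i then Sum.inl () else Sum.inr ⟨i, x, h⟩

/-- The star: the disjoint union of the multigraphs `t i` with all the roots `r i`
identified to a single vertex. -/
def starGraph {n : ℕ} {W F : Fin n → Type} [∀ i, DecidableEq (W i)]
    (t : ∀ i, Multigraph (W i) (F i)) (r : ∀ i, W i) :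
    Multigraph (Unit ⊕ (Σ i, {x : W i // x ≠ r i})) (Σ i, F i) :=
  ⟨fun e => ((t e.1).ends e.2).map (starJ r e.1)⟩

/-! ## Graphs of matrices -/

/-- The partition of `V` identifying the input `vin` with the output `vout` (and nothing
else). -/
def rootSetoid {V : Type} (vin vout : V) : Setoid V where
  r a b := a = b ∨ ((a = vin ∨ a = vout) ∧ (b = vin ∨ b = vout))
  iseqv := by
    constructor
    · intro x; exact Or.inl rfl
    · rintro x y (rfl | ⟨hx, hy⟩)
      · exact Or.inl rfl
      · exact Or.inr ⟨hy, hx⟩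
    · rintro x y z (rfl | ⟨hx, hy⟩) (rfl | ⟨hy', hz⟩)
      · exact Or.inl rfl
      · exact Or.inr ⟨hy', hz⟩
      · exact Or.inr ⟨hx, hy⟩
      · exact Or.inr ⟨hx, hz⟩

/-- The graph of matrices `Z_g(A₁, …, A_K)` associated to a bi-rooted multidigraph `g`
with input `vin`, output `vout` and edge ordering `o`. -/
noncomputable def graphOfMatrices {V E : Type} [Fintype V] [Fintype E] [DecidableEq V] {K N : ℕ}
    (g : Multidigraph V E) (vin vout : V) (o : E ≃ Fin K)
    (A : Fin K → Matrix (Fin N) (Fin N) ℂ) : Matrix (Fin N) (Fin N) ℂ :=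
  Matrix.of fun i j =>
    ∑ φ : V → Fin N,
      if φ vout = i ∧ φ vin = j then ∏ e : E, A (o e) (φ (g.tgt e)) (φ (g.src e)) else 0

/-! ## Set partitions as finite set systems -/

/-- `P` is a partition of the (finite) type `V`: its blocks are nonempty and every
element of `V` lies in exactly one block. -/
def IsPartitionOf (V : Type) [DecidableEq V] (P : Finset (Finset V)) : Prop :=
  (∀ B ∈ P, B.Nonempty) ∧ ∀ v : V, ∃! B, B ∈ P ∧ v ∈ B

/-- The block of the partition `P` containing `v`. -/
def blockOf {V : Type} [DecidableEq V] (P : Finset (Finset V)) (hP : IsPartitionOf V P)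
    (v : V) : {B : Finset V // B ∈ P} :=
  ⟨Finset.choose (fun B => v ∈ B) P (hP.2 v),
    Finset.choose_mem (fun B => v ∈ B) P (hP.2 v)⟩


/-! ## Auxiliary development for Statement 1 -/

namespace Multigraph

variable {V E : Type}

namespace Walk

variable {G : Multigraph V E}

/-! ### basic walk lemmas -/

def copy {u v u' v' : V} (p : G.Walk u v) (hu : u = u') (hv : v = v') : G.Walk u' v' :=
  hu ▸ hv ▸ p

@[simp] lemma edges_copy {u v u' v' : V} (p : G.Walk u v) (hu : u = u') (hv : v = v') :
    (p.copy hu hv).edges = p.edges := by subst hu; subst hv; rfl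

@[simp] lemma verts_copy {u v u' v' : V} (p : G.Walk u v) (hu : u = u') (hv : v = v') :
    (p.copy hu hv).verts = p.verts := by subst hu; subst hv; rfl

def append : {u v w : V} → G.Walk u v → G.Walk v w → G.Walk u w
  | _, _, _, .nil _, q => q
  | _, _, _, .cons e h p, q => .cons e h (append p q)

@[simp] lemma edges_append {u v w : V} (p : G.Walk u v) (q : G.Walk v w) :
    (p.append q).edges = p.edges ++ q.edges := by
  induction p with
  | nil v => simp [append, edges]
  | cons e h p ih => simp [append, edges, ih]

lemma verts_ne_nil {u v : V} (p : G.Walk u v) : p.verts ≠ [] := by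
  cases p <;> simp [verts]

@[simp] lemma length_verts {u v : V} (p : G.Walk u v) :
    p.verts.length = p.edges.length + 1 := by
  induction p with
  | nil v => simp [verts, edges]
  | cons e h p ih => simp [verts, edges, ih]

lemma verts_getElem_zero {u v : V} (p : G.Walk u v) (h : 0 < p.verts.length) :
    p.verts[0] = u := by
  cases p <;> simp [verts]

lemma verts_cons {u v w : V} (e : E) (he : G.ends e = s(u, v)) (p : G.Walk v w) :
    (Walk.cons e he p).verts = u :: p.verts := rfl

lemma edges_cons {u v w : V} (e : E) (he : G.ends e = s(u, v)) (p : G.Walk v w) :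
    (Walk.cons e he p).edges = e :: p.edges := rfl

lemma verts_eq_dropLast_append {u v : V} (p : G.Walk u v) :
    p.verts = p.verts.dropLast ++ [v] := by
  induction p with
  | nil v => simp [verts]
  | cons e hh p ih =>
    obtain ⟨a, l, hal⟩ := List.exists_cons_of_ne_nil (verts_ne_nil p)
    rw [verts_cons, hal, List.dropLast_cons₂]
    rw [hal] at ih
    rw [List.cons_append, ← ih]

lemma start_mem_verts {u v : V} (p : G.Walk u v) : u ∈ p.verts := by
  cases p <;> simp [verts]

lemma ends_getElem {u v : V} (p : G.Walk u v) (t : ℕ) (ht : t < p.edges.length) :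
    G.ends (p.edges[t]) = s(p.verts[t]'(by simp [length_verts]; omega),
      p.verts[t+1]'(by simp [length_verts]; omega)) := by
  induction p generalizing t with
  | nil v => simp [edges] at ht
  | cons e hh p ih =>
    rcases t with _ | t
    · simp only [edges_cons, verts_cons, List.getElem_cons_zero, List.getElem_cons_succ]
      rw [verts_getElem_zero p (by simp [length_verts])]
      exact hh
    · simp only [edges_cons, verts_cons, List.getElem_cons_succ]
      exact ih t (by simpa [edges_cons] using ht)

lemma edges_mem_endpoints {u v : V} (p : G.Walk u v) {f : E} (hf : f ∈ p.edges)
    {B : V} (hB : B ∈ G.ends f) : B ∈ p.verts := by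
  induction p with
  | nil v => simp [edges] at hf
  | cons e hh p ih =>
    simp only [edges, List.mem_cons] at hf
    rcases hf with rfl | hf
    · rw [hh] at hB
      rcases Sym2.mem_iff.1 hB with rfl | rfl
      · exact start_mem_verts _
      · exact List.mem_cons_of_mem _ (start_mem_verts p)
    · exact List.mem_cons_of_mem _ (ih hf)

/-! ### pathify -/

open Classical in
noncomputable def dropUntil : {v w : V} → (p : G.Walk v w) → (u : V) → u ∈ p.verts → G.Walk u w
  | v, _, .nil _, u, h => (Walk.nil v).copy (show v = u from ((by simpa [verts] using h : u = v)).symm) rfl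
  | v, w, .cons e he q, u, h =>
    if hu : v = u then (Walk.cons e he q).copy hu rfl
    else dropUntil q u ((List.mem_cons.1 (show u ∈ v :: q.verts from h)).resolve_left
      (fun h' => hu h'.symm))

lemma verts_dropUntil_suffix {v w : V} (p : G.Walk v w) (u : V) (h : u ∈ p.verts) :
    (p.dropUntil u h).verts.IsSuffix p.verts := by
  induction p with
  | nil x =>
    have hu : u = x := by simpa [verts] using h
    subst hu
    simp [dropUntil]
  | cons e he q ih =>
    rw [dropUntil]
    split
    · next hu => subst hu; simp
    · next hu => exact (ih _).trans (by rw [verts_cons]; exact List.suffix_cons _ _)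

lemma edges_dropUntil_sub {v w : V} (p : G.Walk v w) (u : V) (h : u ∈ p.verts) {f : E}
    (hf : f ∈ (p.dropUntil u h).edges) : f ∈ p.edges := by
  induction p with
  | nil x =>
    have hu : u = x := by simpa [verts] using h
    subst hu
    simpa [dropUntil] using hf
  | cons e he q ih =>
    rw [dropUntil] at hf
    split at hf
    · next hu => simpa using hf
    · next hu => exact List.mem_cons_of_mem _ (ih _ hf)

lemma isPath_dropUntil {v w : V} (p : G.Walk v w) (u : V) (h : u ∈ p.verts)
    (hp : p.IsPath) : (p.dropUntil u h).IsPath :=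
  List.Nodup.sublist (verts_dropUntil_suffix p u h).sublist hp

open Classical in
noncomputable def pathify : {u v : V} → G.Walk u v → G.Walk u v
  | _, _, .nil v => .nil v
  | u, _, .cons e he q =>
    let q' := pathify q
    if h : u ∈ q'.verts then q'.dropUntil u h else .cons e he q'

lemma edges_pathify_sub {u v : V} (p : G.Walk u v) {f : E}
    (hf : f ∈ p.pathify.edges) : f ∈ p.edges := by
  induction p with
  | nil x => simpa [pathify] using hf
  | cons e he q ih =>
    rw [pathify] at hf
    split at hf
    · next h => exact List.mem_cons_of_mem _ (ih (edges_dropUntil_sub _ _ _ hf))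
    · next h =>
      rcases (by simpa [edges] using hf : f = e ∨ f ∈ q.pathify.edges) with rfl | hf
      · simp [edges]
      · exact List.mem_cons_of_mem _ (ih hf)

lemma isPath_pathify {u v : V} (p : G.Walk u v) : p.pathify.IsPath := by
  induction p with
  | nil x => simp [pathify, IsPath, verts]
  | cons e he q ih =>
    rw [pathify]
    split
    · next h => exact isPath_dropUntil _ _ _ ih
    · next h =>
        simp only [IsPath, verts_cons, List.nodup_cons]
        exact ⟨h, ih⟩

lemma nodup_edges_of_isPath {u v : V} (p : G.Walk u v) (hp : p.IsPath) : p.edges.Nodup := by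
  induction p with
  | nil x => simp [edges]
  | cons e he q ih =>
    simp only [IsPath, verts, List.nodup_cons] at hp
    refine List.nodup_cons.2 ⟨fun hmem => ?_, ih hp.2⟩
    exact hp.1 (edges_mem_endpoints q hmem (by rw [he]; exact Sym2.mem_mk_left _ _))

/-! ### splitting a walk at an edge -/

lemma split_at_edge {u v : V} (p : G.Walk u v) {e : E} (he : e ∈ p.edges) :
    ∃ (a b : V) (p₁ : G.Walk u a) (p₂ : G.Walk b v),
      G.ends e = s(a, b) ∧ p₁.edges ++ e :: p₂.edges = p.edges := by
  induction p with
  | nil x => simp [edges] at he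
  | cons f hf q ih =>
    by_cases hef : e = f
    · subst hef
      exact ⟨_, _, .nil _, q, hf, by simp [edges]⟩
    · rcases (by simpa [edges] using he : e = f ∨ e ∈ q.edges) with rfl | he'
      · exact absurd rfl hef
      · obtain ⟨a, b, q₁, q₂, hends, heq⟩ := ih he'
        exact ⟨a, b, .cons f hf q₁, q₂, hends, by simp [edges, ← heq]⟩

/-! ### chains of edges -/

lemma chain'_share {u v : V} (p : G.Walk u v) :
    List.Chain' (fun a b => ∃ B, B ∈ G.ends a ∧ B ∈ G.ends b) p.edges := by
  induction p with
  | nil x => exact List.isChain_nil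
  | cons e he q ih =>
    cases q with
    | nil x => exact List.isChain_singleton _
    | cons f hf r =>
      show List.IsChain _ _
      rw [edges, edges, List.isChain_cons_cons]
      refine ⟨⟨_, by rw [he]; exact Sym2.mem_mk_right _ _, by rw [hf]; exact Sym2.mem_mk_left _ _⟩, ?_⟩
      exact ih

end Walk

/-! ### ReachAvoid lemmas -/

lemma ReachAvoid.head' {F : Set E} {G : Multigraph V E} {u v w : V} (e : E) (he : e ∉ F)
    (h : G.ends e = s(u, v)) (hr : G.ReachAvoid F v w) : G.ReachAvoid F u w := by
  induction hr with
  | refl => exact (ReachAvoid.refl u).tail e he h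
  | tail f hf hvw _ ih => exact ih.tail f hf hvw

lemma ReachAvoid.symm' {F : Set E} {G : Multigraph V E} {u v : V}
    (hr : G.ReachAvoid F u v) : G.ReachAvoid F v u := by
  induction hr with
  | refl => exact .refl _
  | tail f hf hvw _ ih => exact ReachAvoid.head' f hf (by rwa [Sym2.eq_swap] at hvw) ih

lemma Walk.toReachAvoid {F : Set E} {G : Multigraph V E} {u v : V} (p : G.Walk u v)
    (hp : ∀ f ∈ p.edges, f ∉ F) : G.ReachAvoid F u v := by
  induction p with
  | nil x => exact .refl x
  | cons e he q ih =>
    exact ReachAvoid.head' e (hp e (by simp [edges])) he (ih fun f hf => hp f (by simp [edges, hf]))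


/-! ### list chain lemmas -/

lemma chain'_restrict {α : Type} {R : α → α → Prop} {l : List α} (h : List.Chain' R l) :
    List.Chain' (fun a b => a ∈ l ∧ b ∈ l ∧ R a b) l := by
  unfold List.Chain' at h ⊢
  rw [List.isChain_iff_getElem] at h ⊢
  intro i hi
  exact ⟨List.getElem_mem _, List.getElem_mem _, h i hi⟩

lemma rtg_of_chain {α : Type} {R : α → α → Prop} {x : α} {l : List α} (h : List.Chain R x l)
    {y : α} (hy : y ∈ l) : Relation.ReflTransGen R x y := by
  induction l generalizing x with
  | nil => cases hy
  | cons z t ih =>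
    rcases List.mem_cons.1 hy with rfl | hy'
    · exact Relation.ReflTransGen.single (List.chain_cons.1 h).1
    · exact Relation.ReflTransGen.head (List.chain_cons.1 h).1 (ih (List.chain_cons.1 h).2 hy')

lemma rtg_of_chain' {α : Type} {R : α → α → Prop} (hsym : Symmetric R) {l : List α}
    (hc : List.Chain' R l) {a b : α} (ha : a ∈ l) (hb : b ∈ l) :
    Relation.ReflTransGen R a b := by
  cases l with
  | nil => cases ha
  | cons x t =>
    have hch : List.Chain R x t := hc
    have key : ∀ z ∈ x :: t, Relation.ReflTransGen R x z := by
      intro z hz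
      rcases List.mem_cons.1 hz with rfl | hz'
      · exact Relation.ReflTransGen.refl
      · exact rtg_of_chain hch hz'
    haveI : Std.Symm R := ⟨fun _ _ h => hsym h⟩
    exact (Std.Symm.symm _ _ (key a ha)).trans (key b hb)

section Cycles
variable [DecidableEq E] {G : Multigraph V E}
open Walk

set_option linter.unusedSectionVars false

lemma closed_verts_idx {v : V} (w : G.Walk v v) (hnd : w.verts.dropLast.Nodup)
    {i j : ℕ} (hij : i < j) (hj : j < w.verts.length)
    (heq : w.verts[i]'(by omega) = w.verts[j]) :
    i = 0 ∧ j = w.verts.length - 1 := by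
  have hlast : w.verts = w.verts.dropLast ++ [v] := verts_eq_dropLast_append w
  have hdl : w.verts.dropLast.length = w.verts.length - 1 := List.length_dropLast
  have h0 : w.verts[0]'(by omega) = v := verts_getElem_zero w (by omega)
  have hvj : ∀ (hh : j = w.verts.length - 1), w.verts[j] = v := by
    intro hh
    rw [List.getElem_of_eq hlast hj, List.getElem_append_right (by omega)]
    simp [hdl, hh]
  by_cases hjlt : j < w.verts.length - 1
  · exfalso
    have : w.verts.dropLast[i]'(by omega) = w.verts.dropLast[j]'(by omega) := by
      rw [List.getElem_dropLast, List.getElem_dropLast]; exact heq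
    have := (List.Nodup.getElem_inj_iff hnd).1 this
    omega
  · have hj' : j = w.verts.length - 1 := by omega
    refine ⟨?_, hj'⟩
    by_contra hi0
    have hi : 0 < i := by omega
    have h1 : w.verts.dropLast[i]'(by omega) = w.verts.dropLast[0]'(by omega) := by
      rw [List.getElem_dropLast, List.getElem_dropLast, h0, heq, hvj hj']
    have := (List.Nodup.getElem_inj_iff hnd).1 h1
    omega

lemma cycle_loop_eq {S : Finset E} (hS : G.IsSimpleCycleOn S) {e : E} (he : e ∈ S)
    {B : V} (hB : G.ends e = s(B, B)) : S = {e} := by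
  obtain ⟨v, w, hne, hnd, hvc, hto⟩ := hS
  have hew : e ∈ w.edges := by rw [← List.mem_toFinset, hto]; exact he
  obtain ⟨t, ht, hte⟩ := List.mem_iff_getElem.1 hew
  have hends := ends_getElem w t ht
  rw [hte, hB] at hends
  have hvv : w.verts[t]'(by simp [length_verts]; omega) =
      w.verts[t+1]'(by simp [length_verts]; omega) := by
    rcases Sym2.eq_iff.1 hends.symm with ⟨h1, h2⟩ | ⟨h1, h2⟩ <;> rw [h1, h2]
  obtain ⟨hi0, hjk⟩ := closed_verts_idx w hvc (Nat.lt_succ_self t)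
    (by simp [length_verts]; omega) hvv
  have hlen : w.edges.length = 1 := by
    have := length_verts w
    omega
  obtain ⟨aa, haa⟩ := List.length_eq_one_iff.1 hlen
  subst hi0
  have h4 : w.edges[0] = [aa][0]'(by simp) := List.getElem_of_eq haa ht
  simp at h4
  rw [← hto, haa]
  rw [h4] at hte
  rw [hte]
  simp

lemma cycle_two_incidences {S : Finset E} (hS : G.IsSimpleCycleOn S) {a b c : E}
    (ha : a ∈ S) (hb : b ∈ S) (hc : c ∈ S) (hab : a ≠ b) (hac : a ≠ c) (hbc : b ≠ c)
    {B : V} (hBa : B ∈ G.ends a) (hBb : B ∈ G.ends b) (hBc : B ∈ G.ends c) : False := by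
  obtain ⟨v, w, hne, hnd, hvc, hto⟩ := hS
  have hmem : ∀ {f : E}, f ∈ S → f ∈ w.edges := fun hf => by
    rw [← List.mem_toFinset, hto]; exact hf
  have hk := length_verts w
  -- positions
  obtain ⟨ta, hta, htea⟩ := List.mem_iff_getElem.1 (hmem ha)
  obtain ⟨tb, htb, hteb⟩ := List.mem_iff_getElem.1 (hmem hb)
  obtain ⟨tc, htc, htec⟩ := List.mem_iff_getElem.1 (hmem hc)
  have htab : ta ≠ tb := fun h => hab (by subst h; exact htea.symm.trans hteb)
  have htac : ta ≠ tc := fun h => hac (by subst h; exact htea.symm.trans htec)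
  have htbc : tb ≠ tc := fun h => hbc (by subst h; exact hteb.symm.trans htec)
  -- choices
  have hch : ∀ (t : ℕ) (ht : t < w.edges.length) (f : E), w.edges[t] = f → B ∈ G.ends f →
      ∃ ct : ℕ, (ct = t ∨ ct = t + 1) ∧ ∃ (hct : ct < w.verts.length), w.verts[ct] = B := by
    intro t ht f htf hBf
    have hends := ends_getElem w t ht
    rw [htf] at hends
    rw [hends] at hBf
    rcases Sym2.mem_iff.1 hBf with h1 | h1
    · exact ⟨t, Or.inl rfl, by omega, h1.symm⟩
    · exact ⟨t + 1, Or.inr rfl, by omega, h1.symm⟩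
  obtain ⟨ca, hca, hcal, hcaB⟩ := hch ta hta a htea hBa
  obtain ⟨cb, hcb, hcbl, hcbB⟩ := hch tb htb b hteb hBb
  obtain ⟨cc, hcc, hccl, hccB⟩ := hch tc htc c htec hBc
  -- any two distinct choice positions must be {0, len-1}
  have htwo : ∀ {i j : ℕ} (hi : i < w.verts.length) (hj : j < w.verts.length),
      w.verts[i] = B → w.verts[j] = B → i ≠ j →
      (i = 0 ∧ j = w.verts.length - 1) ∨ (j = 0 ∧ i = w.verts.length - 1) := by
    intro i j hi hj hiB hjB hij
    rcases Nat.lt_or_ge i j with h | h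
    · exact Or.inl (closed_verts_idx w hvc h hj (by rw [hiB, hjB]))
    · exact Or.inr (closed_verts_idx w hvc (by omega) hi (by rw [hiB, hjB]))
  by_cases h1 : ca = cb
  · by_cases h2 : ca = cc
    · omega
    · rcases htwo hcal hccl hcaB hccB h2 with ⟨u1, u2⟩ | ⟨u1, u2⟩ <;> omega
  · rcases htwo hcal hcbl hcaB hcbB h1 with ⟨u1, u2⟩ | ⟨u1, u2⟩
    all_goals by_cases h2 : ca = cc
    · omega
    · rcases htwo hcal hccl hcaB hccB h2 with ⟨w1, w2⟩ | ⟨w1, w2⟩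
      · omega
      · by_cases h3 : cb = cc
        · omega
        · rcases htwo hcbl hccl hcbB hccB h3 with ⟨x1, x2⟩ | ⟨x1, x2⟩ <;> omega
    · omega
    · rcases htwo hcal hccl hcaB hccB h2 with ⟨w1, w2⟩ | ⟨w1, w2⟩
      · by_cases h3 : cb = cc
        · omega
        · rcases htwo hcbl hccl hcbB hccB h3 with ⟨x1, x2⟩ | ⟨x1, x2⟩ <;> omega
      · omega

lemma exists_cycle_through {e : E} {x y : V} (he : G.ends e = s(x, y)) (P : G.Walk y x)
    (hP : P.IsPath) (hno : e ∉ P.edges) :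
    ∃ S : Finset E, G.IsSimpleCycleOn S ∧ e ∈ S ∧ ∀ f ∈ S, f = e ∨ f ∈ P.edges := by
  have hv : P.verts = P.verts.dropLast ++ [x] := verts_eq_dropLast_append P
  have hnod : P.verts.Nodup := hP
  have hxnd : x ∉ P.verts.dropLast ∧ P.verts.dropLast.Nodup := by
    rw [hv, List.nodup_append] at hnod
    exact ⟨fun hx => hnod.2.2 x hx x (by simp) rfl, hnod.1⟩
  refine ⟨(Walk.cons e he P).edges.toFinset, ⟨x, Walk.cons e he P, ?_, ?_, ?_, rfl⟩, ?_, ?_⟩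
  · simp [edges_cons]
  · rw [edges_cons]
    exact List.nodup_cons.2 ⟨hno, nodup_edges_of_isPath P hP⟩
  · rw [verts_cons]
    obtain ⟨aa, ll, hal⟩ := List.exists_cons_of_ne_nil (verts_ne_nil P)
    rw [hal, List.dropLast_cons₂, ← hal]
    exact List.nodup_cons.2 ⟨hxnd.1, hxnd.2⟩
  · simp [edges_cons]
  · intro f hf
    rw [List.mem_toFinset, edges_cons] at hf
    simpa using hf

end Cycles


end Multigraph

namespace Multigraph

section CycleQuot

open Walk
open Fin.NatCast
open Fin.CommRing

variable {n : ℕ} [NeZero n] (σ : Setoid (Fin n))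

lemma qends (j : Fin n) : ((cycleGraph n).quot σ).ends j =
    s(Quotient.mk σ j, Quotient.mk σ (j + 1)) := by
  simp [Multigraph.quot, cycleGraph, Sym2.map_pair_eq]

lemma val_add_nat (x : Fin n) (t : ℕ) : ((x + (t : Fin n)) : Fin n).val = (x.val + t) % n := by
  rw [Fin.val_add, Fin.val_natCast, Nat.add_mod, Nat.mod_mod_of_dvd _ dvd_rfl,
    ← Nat.add_mod]

def arcWalk : (a : Fin n) → (k : ℕ) →
    ((cycleGraph n).quot σ).Walk (Quotient.mk σ a) (Quotient.mk σ (a + (k : Fin n)))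
  | a, 0 => (Walk.nil _).copy rfl (by simp)
  | a, (k+1) => (Walk.cons a (qends σ a) (arcWalk (a+1) k)).copy rfl
      (by congr 1; push_cast; ring)

lemma mem_arcWalk_edges (a : Fin n) (k : ℕ) {f : Fin n} (hf : f ∈ (arcWalk σ a k).edges) :
    ∃ t : ℕ, t < k ∧ f = a + (t : Fin n) := by
  induction k generalizing a with
  | zero => rw [arcWalk] at hf; simp [edges] at hf
  | succ k ih =>
    rw [arcWalk] at hf
    rw [edges_copy, edges_cons] at hf
    rcases List.mem_cons.1 hf with rfl | hf'
    · exact ⟨0, Nat.succ_pos k, by simp⟩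
    · obtain ⟨t, ht, rfl⟩ := ih (a+1) hf'
      exact ⟨t + 1, by omega, by push_cast; ring⟩

lemma quot_connected : ((cycleGraph n).quot σ).Connected := by
  intro U W
  induction U using Quotient.inductionOn with | _ u =>
  induction W using Quotient.inductionOn with | _ v =>
  rcases le_or_gt u.val v.val with h | h
  · have hcast : Quotient.mk σ (u + ((v.val - u.val : ℕ) : Fin n)) = Quotient.mk σ v := by
      congr 1
      apply Fin.ext
      rw [val_add_nat]
      rw [Nat.add_sub_cancel' h, Nat.mod_eq_of_lt v.isLt]
    exact (((arcWalk σ u (v.val - u.val)).copy rfl hcast).toReachAvoid (by simp))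
  · have hcast : Quotient.mk σ (u + ((v.val + n - u.val : ℕ) : Fin n)) = Quotient.mk σ v := by
      congr 1
      apply Fin.ext
      rw [val_add_nat]
      have h2 : u.val + (v.val + n - u.val) = v.val + n := by omega
      rw [h2, Nat.add_mod_right, Nat.mod_eq_of_lt v.isLt]
    exact (((arcWalk σ u (v.val + n - u.val)).copy rfl hcast).toReachAvoid (by simp))

lemma natCast_pred : ((n - 1 : ℕ) : Fin n) = -1 := by
  rw [Nat.cast_sub (NeZero.one_le), Nat.cast_one, Fin.natCast_self, zero_sub]

lemma exists_cycle_thru (e : Fin n) :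
    ∃ S : Finset (Fin n), ((cycleGraph n).quot σ).IsSimpleCycleOn S ∧ e ∈ S := by
  have hend : Quotient.mk σ ((e + 1) + ((n - 1 : ℕ) : Fin n)) = Quotient.mk σ e := by
    rw [natCast_pred]; congr 1; ring
  set W := ((arcWalk σ (e+1) (n-1)).copy rfl hend) with hW
  have hWe : e ∉ W.pathify.edges := by
    intro hmem
    have := edges_pathify_sub _ hmem
    rw [hW, edges_copy] at this
    obtain ⟨t, ht, hte⟩ := mem_arcWalk_edges σ _ _ this
    have : ((t : Fin n)) = -1 := by
      have h1 : e + 1 + (t : Fin n) = e := hte.symm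
      linear_combination h1
    rw [← natCast_pred (n := n)] at this
    have := congrArg Fin.val this
    rw [Fin.val_natCast, Fin.val_natCast] at this
    rw [Nat.mod_eq_of_lt (by omega), Nat.mod_eq_of_lt (by omega)] at this
    omega
  obtain ⟨S, hS, heS, -⟩ := exists_cycle_through (qends σ e) W.pathify
    (isPath_pathify _) hWe
  exact ⟨S, hS, heS⟩

lemma cyc4 (hnc : NonCrossingRel σ.r) (w : Fin n) (t₁ t₂ t₃ t₄ : ℕ)
    (h12 : t₁ < t₂) (h23 : t₂ < t₃) (h34 : t₃ < t₄) (h4n : t₄ < n)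
    (r13 : σ.r (w + (t₁ : Fin n)) (w + (t₃ : Fin n)))
    (r24 : σ.r (w + (t₂ : Fin n)) (w + (t₄ : Fin n)))
    (nr12 : ¬ σ.r (w + (t₁ : Fin n)) (w + (t₂ : Fin n))) : False := by
  have hsm : ∀ {x y : Fin n}, σ.r x y → σ.r y x := fun h => σ.iseqv.symm h
  have htr : ∀ {x y z : Fin n}, σ.r x y → σ.r y z → σ.r x z := fun h h' => σ.iseqv.trans h h'
  have hw := w.isLt
  have key : ∀ t : ℕ, w.val + t < n → ((w + (t : Fin n)).val) = w.val + t := by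
    intro t h
    rw [val_add_nat, Nat.mod_eq_of_lt h]
  have key2 : ∀ t : ℕ, t < n → n ≤ w.val + t → ((w + (t : Fin n)).val) = w.val + t - n := by
    intro t ht h
    rw [val_add_nat, Nat.mod_eq_sub_mod h, Nat.mod_eq_of_lt (by omega)]
  by_cases b4 : w.val + t₄ < n
  · have e1 := key t₁ (by omega)
    have e2 := key t₂ (by omega)
    have e3 := key t₃ (by omega)
    have e4 := key t₄ (by omega)
    exact hnc ⟨_, _, _, _, by rw [Fin.lt_def, e1, e2]; omega,
      by rw [Fin.lt_def, e2, e3]; omega, by rw [Fin.lt_def, e3, e4]; omega, r13, r24, nr12⟩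
  · by_cases b3 : w.val + t₃ < n
    · have e1 := key t₁ (by omega)
      have e2 := key t₂ (by omega)
      have e3 := key t₃ (by omega)
      have e4 := key2 t₄ (by omega) (by omega)
      exact hnc ⟨_, _, _, _, by rw [Fin.lt_def, e4, e1]; omega,
        by rw [Fin.lt_def, e1, e2]; omega, by rw [Fin.lt_def, e2, e3]; omega,
        hsm r24, r13, fun h => nr12 (hsm (htr r24 h))⟩
    · by_cases b2 : w.val + t₂ < n
      · have e1 := key t₁ (by omega)
        have e2 := key t₂ (by omega)
        have e3 := key2 t₃ (by omega) (by omega)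
        have e4 := key2 t₄ (by omega) (by omega)
        exact hnc ⟨_, _, _, _, by rw [Fin.lt_def, e3, e4]; omega,
          by rw [Fin.lt_def, e4, e1]; omega, by rw [Fin.lt_def, e1, e2]; omega,
          hsm r13, hsm r24, fun h => nr12 (htr (htr r13 h) (hsm r24))⟩
      · by_cases b1 : w.val + t₁ < n
        · have e1 := key t₁ (by omega)
          have e2 := key2 t₂ (by omega) (by omega)
          have e3 := key2 t₃ (by omega) (by omega)
          have e4 := key2 t₄ (by omega) (by omega)
          exact hnc ⟨_, _, _, _, by rw [Fin.lt_def, e2, e3]; omega,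
            by rw [Fin.lt_def, e3, e4]; omega, by rw [Fin.lt_def, e4, e1]; omega,
            r24, hsm r13, fun h => nr12 (hsm (htr h (hsm r13)))⟩
        · have e1 := key2 t₁ (by omega) (by omega)
          have e2 := key2 t₂ (by omega) (by omega)
          have e3 := key2 t₃ (by omega) (by omega)
          have e4 := key2 t₄ (by omega) (by omega)
          exact hnc ⟨_, _, _, _, by rw [Fin.lt_def, e1, e2]; omega,
            by rw [Fin.lt_def, e2, e3]; omega, by rw [Fin.lt_def, e3, e4]; omega, r13, r24, nr12⟩

/-! ### offset arithmetic helpers -/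

lemma val_add_cases (y : Fin n) (s : ℕ) (hs : s < n) :
    ((y + (s : Fin n)).val = y.val + s ∧ y.val + s < n) ∨
    ((y + (s : Fin n)).val = y.val + s - n ∧ n ≤ y.val + s) := by
  rcases lt_or_ge (y.val + s) n with h | h
  · exact Or.inl ⟨by rw [val_add_nat, Nat.mod_eq_of_lt h], h⟩
  · refine Or.inr ⟨?_, h⟩
    rw [val_add_nat, Nat.mod_eq_sub_mod h, Nat.mod_eq_of_lt (by have := y.isLt; omega)]

lemma add_offset_inj {y : Fin n} {s s' : ℕ} (hs : s ≤ n - 1) (hs' : s' ≤ n - 1)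
    (h : y + (s : Fin n) = y + (s' : Fin n)) : s = s' := by
  have hn := Nat.pos_of_ne_zero (NeZero.ne n)
  have hv := congrArg Fin.val h
  have hy := y.isLt
  rcases val_add_cases y s (by omega) with ⟨h1, h2⟩ | ⟨h1, h2⟩ <;>
    rcases val_add_cases y s' (by omega) with ⟨h3, h4⟩ | ⟨h3, h4⟩ <;> omega

lemma add_offset_ne {y : Fin n} {s : ℕ} (h1 : 1 ≤ s) (h2 : s ≤ n - 1) :
    y + (s : Fin n) ≠ y := by
  intro h
  have h' : y + (s : Fin n) = y + ((0 : ℕ) : Fin n) := by rw [Nat.cast_zero, add_zero]; exact h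
  have : s = 0 := add_offset_inj h2 (by omega) h'
  omega

lemma exists_offset (x v : Fin n) : ∃ s : ℕ, s ≤ n - 1 ∧ v = x + (s : Fin n) := by
  have hx := x.isLt
  have hv := v.isLt
  have hn := Nat.pos_of_ne_zero (NeZero.ne n)
  rcases le_or_gt x.val v.val with h | h
  · refine ⟨v.val - x.val, by omega, ?_⟩
    apply Fin.ext
    rw [val_add_nat, Nat.add_sub_cancel' h, Nat.mod_eq_of_lt hv]
  · refine ⟨v.val + n - x.val, by omega, ?_⟩
    apply Fin.ext
    rw [val_add_nat, show x.val + (v.val + n - x.val) = v.val + n by omega,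
      Nat.add_mod_right, Nat.mod_eq_of_lt hv]

lemma add_offset_shift (y : Fin n) {s : ℕ} (h1 : 1 ≤ s) :
    y + (s : Fin n) = (y + ((s - 1 : ℕ) : Fin n)) + 1 := by
  conv_lhs => rw [show s = (s - 1) + 1 by omega]
  push_cast
  ring

/-! ### the core cut lemma -/

lemma core_cut {J : Set (Fin n)} {e₁ e₂ : Fin n}
    (Hns : ∀ u ∈ J, ∀ v ∉ J, ¬ σ.r u v)
    (Hb : ∀ j : Fin n, j ≠ e₁ → j ≠ e₂ → (j ∈ J ↔ (j + 1) ∈ J))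
    {U W : Quotient σ} (hr : ((cycleGraph n).quot σ).ReachAvoid {e₁, e₂} U W) :
    ((∃ u ∈ J, Quotient.mk σ u = U) ↔ (∃ u ∈ J, Quotient.mk σ u = W)) := by
  have hPmk : ∀ p : Fin n,
      (∃ u ∈ J, Quotient.mk σ u = Quotient.mk σ p) ↔ p ∈ J := by
    intro p
    constructor
    · rintro ⟨u, hu, hup⟩
      by_contra hp
      exact Hns u hu p hp (Quotient.exact hup)
    · intro hp; exact ⟨p, hp, rfl⟩
  induction hr with
  | refl => exact Iff.rfl
  | tail f hf hvw hprev ih =>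
    refine ih.trans ?_
    have hq : s(Quotient.mk σ f, Quotient.mk σ (f + 1)) = _ := (qends σ f).symm.trans hvw
    have hfe₁ : f ≠ e₁ := fun h => hf (by simp [h])
    have hfe₂ : f ≠ e₂ := fun h => hf (by simp [h])
    have hmain : (∃ u ∈ J, Quotient.mk σ u = Quotient.mk σ f) ↔
        (∃ u ∈ J, Quotient.mk σ u = Quotient.mk σ (f + 1)) := by
      rw [hPmk, hPmk]; exact Hb f hfe₁ hfe₂
    rcases Sym2.eq_iff.1 hq with ⟨h1, h2⟩ | ⟨h1, h2⟩
    · rw [← h1, ← h2]; exact hmain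
    · rw [← h1, ← h2]; exact hmain.symm

/-! ### right companion -/

attribute [local instance] Classical.propDecidable

noncomputable def sR (x : Fin n) : ℕ :=
  Nat.findGreatest (fun s => σ.r x (x + (s : Fin n))) (n - 1)

noncomputable def compR (m : Fin n) : Fin n := (m + 1) + ((sR σ (m + 1) : ℕ) : Fin n)

lemma sR_spec (x : Fin n) : σ.r x (x + ((sR σ x : ℕ) : Fin n)) := by
  have h0 : σ.r x (x + ((0 : ℕ) : Fin n)) := by simpa using σ.iseqv.refl x
  exact Nat.findGreatest_spec (P := fun s => σ.r x (x + (s : Fin n))) (Nat.zero_le _) h0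

lemma sR_le (x : Fin n) : sR σ x ≤ n - 1 :=
  Nat.findGreatest_le (P := fun s => σ.r x (x + (s : Fin n))) _

lemma sR_max (x : Fin n) {s : ℕ} (h1 : sR σ x < s) (h2 : s ≤ n - 1) :
    ¬ σ.r x (x + (s : Fin n)) :=
  Nat.findGreatest_is_greatest (P := fun s => σ.r x (x + (s : Fin n))) h1 h2

lemma nonloop_aux {m : Fin n} (hnl : ¬ σ.r m (m + 1)) : 2 ≤ n := by
  by_contra h
  have hn := Nat.pos_of_ne_zero (NeZero.ne n)
  have h1 : n = 1 := by omega
  apply hnl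
  have : m + 1 = m := by subst h1; exact Subsingleton.elim _ _
  rw [this]

lemma m_eq_offset (m : Fin n) : m = (m + 1) + ((n - 1 : ℕ) : Fin n) := by
  rw [natCast_pred]; ring

lemma sR_lt {m : Fin n} (hnl : ¬ σ.r m (m + 1)) : sR σ (m + 1) < n - 1 := by
  have h2 := nonloop_aux σ hnl
  rcases Nat.lt_or_ge (sR σ (m + 1)) (n - 1) with h | h
  · exact h
  · exfalso
    have heq : sR σ (m + 1) = n - 1 := le_antisymm (sR_le σ _) h
    have := sR_spec σ (m + 1)
    rw [heq, ← m_eq_offset m] at this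
    exact hnl (σ.iseqv.symm this)

lemma cutR {m : Fin n} (hnc : NonCrossingRel σ.r) (hnl : ¬ σ.r m (m + 1)) :
    ¬ ((cycleGraph n).quot σ).ReachAvoid {m, compR σ m}
      (Quotient.mk σ m) (Quotient.mk σ (m + 1)) := by
  intro hr
  have hn2 := nonloop_aux σ hnl
  have hsm : ∀ {a b : Fin n}, σ.r a b → σ.r b a := fun h => σ.iseqv.symm h
  have htr : ∀ {a b c : Fin n}, σ.r a b → σ.r b c → σ.r a c := fun h h' => σ.iseqv.trans h h'
  set x := m + 1 with hx
  set d := sR σ x with hd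
  have hdlt : d < n - 1 := sR_lt σ hnl
  set J : Set (Fin n) := {u | ∃ s : ℕ, d < s ∧ s ≤ n - 1 ∧ u = x + (s : Fin n)} with hJ
  have hxJ : ∀ s : ℕ, d < s → s ≤ n - 1 → ¬ σ.r x (x + (s : Fin n)) :=
    fun s h1 h2 => sR_max σ x h1 h2
  -- no straddle
  have Hns : ∀ u ∈ J, ∀ v ∉ J, ¬ σ.r u v := by
    rintro u ⟨s', hs'1, hs'2, rfl⟩ v hv hruv
    obtain ⟨s'', hs''2, rfl⟩ := exists_offset (x := x) (v := v)
    have hne : s'' ≠ s' := by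
      rintro rfl
      exact hv ⟨s'', hs'1, hs'2, rfl⟩
    have hnotJ : ¬ (d < s'' ∧ s'' ≤ n - 1) := fun ⟨a1, a2⟩ => hv ⟨s'', a1, a2, rfl⟩
    have hs''le : s'' ≤ d := by omega
    rcases Nat.eq_zero_or_pos s'' with rfl | hpos
    · -- v = x
      rw [show ((0:ℕ) : Fin n) = 0 by simp, add_zero] at hruv
      exact hxJ s' hs'1 hs'2 (hsm hruv)
    · rcases Nat.lt_or_ge s'' d with hlt | hge
      · -- 1 ≤ s'' < d
        by_cases hxv : σ.r x (x + (s'' : Fin n))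
        · exact hxJ s' hs'1 hs'2 (htr hxv (hsm hruv))
        · exact cyc4 σ hnc x 0 s'' d s' (by omega) hlt (by omega) (by omega)
            (by simpa using sR_spec σ x) (hsm hruv) (by simpa using hxv)
      · -- s'' = d : v = compR
        have : s'' = d := by omega
        subst this
        exact hxJ s' hs'1 hs'2 (htr (sR_spec σ x) (hsm hruv))
  -- boundary
  have Hb : ∀ j : Fin n, j ≠ m → j ≠ compR σ m → (j ∈ J ↔ (j + 1) ∈ J) := by
    intro j hjm hjc
    constructor
    · rintro ⟨s, hs1, hs2, rfl⟩
      rcases Nat.lt_or_ge s (n - 1) with h | h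
      · exact ⟨s + 1, by omega, by omega, by rw [add_offset_shift x (by omega : 1 ≤ s + 1)]; simp⟩
      · exfalso
        apply hjm
        have : s = n - 1 := by omega
        subst this
        exact (m_eq_offset m).symm
    · rintro ⟨s, hs1, hs2, hEq⟩
      have hs0 : 1 ≤ s := by omega
      have hj : j = x + ((s - 1 : ℕ) : Fin n) := by
        have := add_offset_shift x hs0
        rw [this] at hEq
        exact add_right_cancel hEq
      rcases Nat.lt_or_ge d (s - 1) with h | h
      · exact ⟨s - 1, h, by omega, hj⟩
      · exfalso
        apply hjc
        have : s - 1 = d := by omega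
        rw [hj, this]
        rfl
  have hiff := core_cut σ Hns Hb hr
  have hmJ : m ∈ J := ⟨n - 1, hdlt, le_refl _, m_eq_offset m⟩
  obtain ⟨u, huJ, hux⟩ := hiff.1 ⟨m, hmJ, rfl⟩
  obtain ⟨s, hs1, hs2, rfl⟩ := huJ
  exact hxJ s hs1 hs2 (hsm (Quotient.exact hux))

/-! ### left companion -/

lemma dL_ex (j : Fin n) : ∃ t : ℕ, 1 ≤ t ∧ σ.r j (j + (t : Fin n)) :=
  ⟨n, Nat.pos_of_ne_zero (NeZero.ne n), by rw [Fin.natCast_self, add_zero]⟩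

noncomputable def dL (j : Fin n) : ℕ := Nat.find (dL_ex σ j)

noncomputable def compL (j : Fin n) : Fin n := j + ((dL σ j - 1 : ℕ) : Fin n)

lemma dL_spec (j : Fin n) : 1 ≤ dL σ j ∧ σ.r j (j + ((dL σ j : ℕ) : Fin n)) :=
  Nat.find_spec (dL_ex σ j)

lemma dL_min (j : Fin n) {t : ℕ} (h1 : 1 ≤ t) (h2 : t < dL σ j) :
    ¬ σ.r j (j + (t : Fin n)) :=
  fun hr => Nat.find_min (dL_ex σ j) h2 ⟨h1, hr⟩

lemma dL_le (j : Fin n) : dL σ j ≤ n := by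
  by_contra h
  exact dL_min σ j (Nat.pos_of_ne_zero (NeZero.ne n)) (by omega)
    (by rw [Fin.natCast_self, add_zero])

lemma dL_two {j : Fin n} (hnl : ¬ σ.r j (j + 1)) : 2 ≤ dL σ j := by
  have h1 := (dL_spec σ j).1
  rcases Nat.lt_or_ge (dL σ j) 2 with h | h
  · exfalso
    have : dL σ j = 1 := by omega
    have hs := (dL_spec σ j).2
    rw [this] at hs
    exact hnl (by simpa using hs)
  · exact h

lemma cutL {j : Fin n} (hnc : NonCrossingRel σ.r) (hnl : ¬ σ.r j (j + 1)) :
    ¬ ((cycleGraph n).quot σ).ReachAvoid {j, compL σ j}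
      (Quotient.mk σ j) (Quotient.mk σ (j + 1)) := by
  intro hr
  have hn2 := nonloop_aux σ hnl
  have hsm : ∀ {a b : Fin n}, σ.r a b → σ.r b a := fun h => σ.iseqv.symm h
  have htr : ∀ {a b c : Fin n}, σ.r a b → σ.r b c → σ.r a c := fun h h' => σ.iseqv.trans h h'
  set d := dL σ j with hd
  have hd2 : 2 ≤ d := dL_two σ hnl
  have hdn : d ≤ n := dL_le σ j
  set J : Set (Fin n) := {u | ∃ t : ℕ, 1 ≤ t ∧ t < d ∧ u = j + (t : Fin n)} with hJ
  have Hns : ∀ u ∈ J, ∀ v ∉ J, ¬ σ.r u v := by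
    rintro u ⟨t, ht1, ht2, rfl⟩ v hv hruv
    obtain ⟨s, hs2, rfl⟩ := exists_offset (x := j) (v := v)
    have hnotJ : ¬ (1 ≤ s ∧ s < d) := fun ⟨a1, a2⟩ => hv ⟨s, a1, a2, rfl⟩
    rcases Nat.eq_zero_or_pos s with rfl | hpos
    · rw [show ((0:ℕ) : Fin n) = 0 by simp, add_zero] at hruv
      exact dL_min σ j ht1 ht2 (hsm hruv)
    · have hsd : d ≤ s := by omega
      rcases Nat.eq_or_lt_of_le hsd with heq | hlt
      · subst heq
        exact dL_min σ j ht1 ht2 (htr (dL_spec σ j).2 (hsm hruv))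
      · exact cyc4 σ hnc j 0 t d s (by omega) ht2 hlt (by omega)
          (by simpa using (dL_spec σ j).2) hruv
          (by simpa using (dL_min σ j ht1 ht2))
  have Hb : ∀ k : Fin n, k ≠ j → k ≠ compL σ j → (k ∈ J ↔ (k + 1) ∈ J) := by
    intro k hkj hkc
    constructor
    · rintro ⟨t, ht1, ht2, rfl⟩
      rcases Nat.lt_or_ge (t + 1) d with h | h
      · exact ⟨t + 1, by omega, h, by rw [add_offset_shift j (by omega : 1 ≤ t + 1)]; simp⟩
      · exfalso
        apply hkc
        have : t = d - 1 := by omega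
        rw [this]
        rfl
    · rintro ⟨t, ht1, ht2, hEq⟩
      rcases Nat.lt_or_ge 1 t with h | h
      · refine ⟨t - 1, by omega, by omega, ?_⟩
        have := add_offset_shift j ht1
        rw [this] at hEq
        exact add_right_cancel hEq
      · exfalso
        apply hkj
        have : t = 1 := by omega
        subst this
        have : k + 1 = j + 1 := by simpa using hEq
        exact add_right_cancel this
  have hiff := core_cut σ Hns Hb hr
  have hj1J : (j + 1) ∈ J := ⟨1, le_refl _, by omega, by simp⟩
  obtain ⟨u, huJ, hux⟩ := hiff.2 ⟨j + 1, hj1J, rfl⟩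
  obtain ⟨t, ht1, ht2, rfl⟩ := huJ
  exact dL_min σ j ht1 ht2 (hsm (Quotient.exact hux))

/-! ### companions belong to every simple cycle -/

lemma comp_mem {S : Finset (Fin n)} (hS : ((cycleGraph n).quot σ).IsSimpleCycleOn S)
    {a : Fin n} (haS : a ∈ S) (c : Fin n)
    (hcut : ¬ ((cycleGraph n).quot σ).ReachAvoid {a, c}
      (Quotient.mk σ a) (Quotient.mk σ (a + 1))) :
    c ∈ S := by
  by_contra hc
  obtain ⟨v, w, hne, hnd, hvc, hto⟩ := hS
  have haw : a ∈ w.edges := by rw [← List.mem_toFinset, hto]; exact haS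
  obtain ⟨A, B, p₁, p₂, hends, heq⟩ := split_at_edge w haw
  have hnd' := hnd
  rw [← heq, List.nodup_append] at hnd'
  have ha1 : a ∉ p₁.edges := fun h => hnd'.2.2 a h a (by simp) rfl
  have ha2 : a ∉ p₂.edges := (List.nodup_cons.1 hnd'.2.1).1
  have hsub : ∀ f ∈ (p₂.append p₁).edges, f ∈ w.edges := by
    intro f hf
    rw [edges_append] at hf
    rw [← heq]
    rcases List.mem_append.1 hf with h | h
    · simp [h]
    · simp [h]
  have havoid : ∀ f ∈ (p₂.append p₁).edges, f ∉ ({a, c} : Set (Fin n)) := by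
    intro f hf hmem
    rcases hmem with rfl | rfl
    · rw [edges_append, List.mem_append] at hf
      rcases hf with h | h
      · exact ha2 h
      · exact ha1 h
    · exact hc (by rw [← hto, List.mem_toFinset]; exact hsub f hf)
  have hreach := (p₂.append p₁).toReachAvoid havoid
  have hq : s(A, B) = s(Quotient.mk σ a, Quotient.mk σ (a + 1)) :=
    hends.symm.trans (qends σ a)
  rcases Sym2.eq_iff.1 hq with ⟨h1, h2⟩ | ⟨h1, h2⟩
  · rw [h1] at hreach
    rw [h2] at hreach
    exact hcut hreach.symm'
  · rw [h1] at hreach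
    rw [h2] at hreach
    exact hcut hreach

lemma compR_mem (hnc : NonCrossingRel σ.r) {S : Finset (Fin n)}
    (hS : ((cycleGraph n).quot σ).IsSimpleCycleOn S) {a : Fin n} (haS : a ∈ S)
    (hnl : ¬ σ.r a (a + 1)) : compR σ a ∈ S :=
  comp_mem σ hS haS _ (cutR σ hnc hnl)

lemma compL_mem (hnc : NonCrossingRel σ.r) {S : Finset (Fin n)}
    (hS : ((cycleGraph n).quot σ).IsSimpleCycleOn S) {a : Fin n} (haS : a ∈ S)
    (hnl : ¬ σ.r a (a + 1)) : compL σ a ∈ S :=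
  comp_mem σ hS haS _ (cutL σ hnc hnl)

lemma compR_ne {a : Fin n} (hnl : ¬ σ.r a (a + 1)) : compR σ a ≠ a := by
  intro h
  rw [compR, m_eq_offset a] at h
  have h2 : a + 1 + ((n - 1 : ℕ) : Fin n) + 1 + ((sR σ (a + 1 + ((n - 1 : ℕ) : Fin n) + 1) : ℕ) : Fin n)
      = a + 1 + ((n - 1 : ℕ) : Fin n) := h
  have h3 := add_offset_inj (y := a + 1) (sR_le σ (a + 1)) (le_refl (n - 1))
    (by rw [← m_eq_offset a] at h ⊢; exact h)
  exact absurd h3 (by have := sR_lt σ hnl; omega)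

lemma compR_endblock (a : Fin n) :
    Quotient.mk σ (compR σ a) = Quotient.mk σ (a + 1) :=
  Quotient.sound (σ.iseqv.symm (sR_spec σ (a + 1)))

lemma compL_ne {a : Fin n} (hnl : ¬ σ.r a (a + 1)) : compL σ a ≠ a := by
  have h2 := dL_two σ hnl
  have hn := dL_le σ a
  exact add_offset_ne (by omega) (by omega)

lemma compL_endblock (a : Fin n) :
    Quotient.mk σ (compL σ a + 1) = Quotient.mk σ a := by
  have h1 := (dL_spec σ a).1
  have : compL σ a + 1 = a + ((dL σ a : ℕ) : Fin n) := by
    rw [compL, ← add_offset_shift a h1]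
  rw [this]
  exact Quotient.sound (σ.iseqv.symm (dL_spec σ a).2)

/-! ### step lemma for transferring edges between cycles -/

lemma cstep (hnc : NonCrossingRel σ.r) {S T : Finset (Fin n)}
    (hS : ((cycleGraph n).quot σ).IsSimpleCycleOn S)
    (hT : ((cycleGraph n).quot σ).IsSimpleCycleOn T)
    {a b : Fin n} (haS : a ∈ S) (haT : a ∈ T) (hbS : b ∈ S) (hab : b ≠ a)
    {B : Quotient σ} (hBa : B ∈ ((cycleGraph n).quot σ).ends a)
    (hBb : B ∈ ((cycleGraph n).quot σ).ends b) : b ∈ T := by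
  by_cases hnl : σ.r a (a + 1)
  · exfalso
    have hq : ((cycleGraph n).quot σ).ends a = s(Quotient.mk σ a, Quotient.mk σ a) := by
      have h' : Quotient.mk σ (a + 1) = Quotient.mk σ a := Quotient.sound (σ.iseqv.symm hnl)
      rw [qends, h']
    have := cycle_loop_eq hS haS hq
    rw [this] at hbS
    simp at hbS
    exact hab hbS
  · have hBa' : B ∈ s(Quotient.mk σ a, Quotient.mk σ (a + 1)) := by rwa [qends] at hBa
    rcases Sym2.mem_iff.1 hBa' with hB | hB
    · -- B = ⟦a⟧ : use left companion
      set c := compL σ a with hcdef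
      have hcS : c ∈ S := compL_mem σ hnc hS haS hnl
      have hcT : c ∈ T := compL_mem σ hnc hT haT hnl
      have hca : c ≠ a := compL_ne σ hnl
      by_cases hbc : b = c
      · rw [hbc]; exact hcT
      · exfalso
        refine cycle_two_incidences hS haS hcS hbS (fun h => hca h.symm) (fun h => hab h.symm)
          (fun h => hbc h.symm) hBa ?_ hBb
        rw [qends, hB, ← compL_endblock σ a]
        exact Sym2.mem_mk_right _ _
    · -- B = ⟦a+1⟧ : use right companion
      set c := compR σ a with hcdef
      have hcS : c ∈ S := compR_mem σ hnc hS haS hnl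
      have hcT : c ∈ T := compR_mem σ hnc hT haT hnl
      have hca : c ≠ a := compR_ne σ hnl
      by_cases hbc : b = c
      · rw [hbc]; exact hcT
      · exfalso
        refine cycle_two_incidences hS haS hcS hbS (fun h => hca h.symm) (fun h => hab h.symm)
          (fun h => hbc h.symm) hBa ?_ hBb
        rw [qends, hB, ← compR_endblock σ a]
        exact Sym2.mem_mk_left _ _

lemma cycle_subset (hnc : NonCrossingRel σ.r) {S T : Finset (Fin n)}
    (hS : ((cycleGraph n).quot σ).IsSimpleCycleOn S)
    (hT : ((cycleGraph n).quot σ).IsSimpleCycleOn T)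
    {e : Fin n} (heS : e ∈ S) (heT : e ∈ T) : S ⊆ T := by
  obtain ⟨v, w, hne, hnd, hvc, hto⟩ := id hS
  intro g hgS
  have hgw : g ∈ w.edges := by rw [← List.mem_toFinset, hto]; exact hgS
  have hew : e ∈ w.edges := by rw [← List.mem_toFinset, hto]; exact heS
  have hchain := chain'_restrict (chain'_share w)
  have hsym : Symmetric (fun a b => a ∈ w.edges ∧ b ∈ w.edges ∧
      ∃ B, B ∈ ((cycleGraph n).quot σ).ends a ∧ B ∈ ((cycleGraph n).quot σ).ends b) := by
    rintro a b ⟨h1, h2, B, h3, h4⟩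
    exact ⟨h2, h1, B, h4, h3⟩
  have hrtg := rtg_of_chain' hsym hchain hew hgw
  clear hgw hgS
  induction hrtg with
  | refl => exact heT
  | tail hxy hR ih =>
    rename_i x y
    obtain ⟨hxw, hyw, B, hBx, hBy⟩ := hR
    have hxS : x ∈ S := by rw [← hto, List.mem_toFinset]; exact hxw
    have hyS : y ∈ S := by rw [← hto, List.mem_toFinset]; exact hyw
    by_cases hyx : y = x
    · rw [hyx]; exact ih
    · exact cstep σ hnc hS hT hxS ih hyS hyx hBx hBy

lemma cactus_of_noncrossing (hnc : NonCrossingRel σ.r) :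
    ((cycleGraph n).quot σ).IsCactus := by
  refine ⟨quot_connected σ, fun e => ?_⟩
  obtain ⟨S, hS, heS⟩ := exists_cycle_thru σ e
  refine ⟨S, ⟨hS, heS⟩, ?_⟩
  rintro T ⟨hT, heT⟩
  exact le_antisymm (cycle_subset σ hnc hT hS heT heS) (cycle_subset σ hnc hS hT heS heT)

/-! ### crossing implies not cactus -/

lemma reach_last {F : Set (Fin n)} {U W : Quotient σ}
    (h : ((cycleGraph n).quot σ).ReachAvoid F U W) :
    U = W ∨ ∃ f : Fin n, f ∉ F ∧
      (W = Quotient.mk σ f ∨ W = Quotient.mk σ (f + 1)) := by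
  cases h with
  | refl => exact Or.inl rfl
  | tail f hf hvw hp =>
    rcases Sym2.eq_iff.1 ((qends σ f).symm.trans hvw) with ⟨h1, h2⟩ | ⟨h1, h2⟩
    · exact Or.inr ⟨f, hf, Or.inr h2.symm⟩
    · exact Or.inr ⟨f, hf, Or.inl h1.symm⟩

lemma not_cactus_of_crossing (hcr : ¬ NonCrossingRel σ.r) :
    ¬ ((cycleGraph n).quot σ).IsCactus := by
  intro hcac
  rw [NonCrossingRel, not_not] at hcr
  have hex : ∃ k : ℕ, ∃ a b c d : Fin n,
      a < b ∧ b < c ∧ c < d ∧ σ.r a c ∧ σ.r b d ∧ ¬ σ.r a b ∧ c.val - b.val = k := by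
    obtain ⟨a, b, c, d, h1, h2, h3, h4, h5, h6⟩ := hcr
    exact ⟨c.val - b.val, a, b, c, d, h1, h2, h3, h4, h5, h6, rfl⟩
  classical
  obtain ⟨a, b, c, d, hab, hbc, hcd, rac, rbd, nrab, hk⟩ := Nat.find_spec hex
  have hmin := fun (k' : ℕ) (h : k' < Nat.find hex) => Nat.find_min hex h
  have hsm : ∀ {x y : Fin n}, σ.r x y → σ.r y x := fun h => σ.iseqv.symm h
  have htr : ∀ {x y z : Fin n}, σ.r x y → σ.r y z → σ.r x z := fun h h' => σ.iseqv.trans h h'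
  have hav := a.isLt
  have hbv := b.isLt
  have hcv := c.isLt
  have hdv := d.isLt
  have hab' : a.val < b.val := Fin.lt_def.1 hab
  have hbc' : b.val < c.val := Fin.lt_def.1 hbc
  have hcd' : c.val < d.val := Fin.lt_def.1 hcd
  set e : Fin n := ⟨c.val - 1, by omega⟩ with hedef
  have heval : e.val = c.val - 1 := rfl
  have hcast1 : (1 : Fin n) = ((1 : ℕ) : Fin n) := by simp
  have he1 : e + 1 = c := by
    apply Fin.ext
    rw [hcast1, val_add_nat, Nat.mod_eq_of_lt (by omega)]
    omega
  -- the walks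
  have hsrc1 : Quotient.mk σ a = Quotient.mk σ c := Quotient.sound rac
  have harc1 : Quotient.mk σ (a + ((c.val - 1 - a.val : ℕ) : Fin n)) = Quotient.mk σ e := by
    congr 1
    apply Fin.ext
    rw [val_add_nat, Nat.mod_eq_of_lt (by omega)]
    omega
  set W1 := ((arcWalk σ a (c.val - 1 - a.val)).copy hsrc1 harc1) with hW1def
  have harc2 : Quotient.mk σ (c + ((d.val - c.val : ℕ) : Fin n)) = Quotient.mk σ b := by
    have hcd2 : c + ((d.val - c.val : ℕ) : Fin n) = d := by
      apply Fin.ext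
      rw [val_add_nat, Nat.mod_eq_of_lt (by omega)]
      omega
    rw [hcd2]
    exact Quotient.sound (hsm rbd)
  have harc3 : Quotient.mk σ (b + ((c.val - 1 - b.val : ℕ) : Fin n)) = Quotient.mk σ e := by
    congr 1
    apply Fin.ext
    rw [val_add_nat, Nat.mod_eq_of_lt (by omega)]
    omega
  set W2 := (((arcWalk σ c (d.val - c.val)).copy rfl harc2).append
    ((arcWalk σ b (c.val - 1 - b.val)).copy rfl harc3)) with hW2def
  have hends_e : ((cycleGraph n).quot σ).ends e = s(Quotient.mk σ e, Quotient.mk σ c) := by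
    rw [qends, he1]
  -- edge bounds
  have hW1b : ∀ f ∈ W1.edges, a.val ≤ f.val ∧ f.val < c.val - 1 := by
    intro f hf
    rw [hW1def, edges_copy] at hf
    obtain ⟨t, ht, rfl⟩ := mem_arcWalk_edges σ _ _ hf
    rw [val_add_nat, Nat.mod_eq_of_lt (by omega)]
    omega
  have hW2b : ∀ f ∈ W2.edges,
      (c.val ≤ f.val ∧ f.val < d.val) ∨ (b.val ≤ f.val ∧ f.val < c.val - 1) := by
    intro f hf
    rw [hW2def, edges_append, edges_copy, edges_copy, List.mem_append] at hf
    rcases hf with hf | hf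
    · obtain ⟨t, ht, rfl⟩ := mem_arcWalk_edges σ _ _ hf
      rw [val_add_nat, Nat.mod_eq_of_lt (by omega)]
      omega
    · obtain ⟨t, ht, rfl⟩ := mem_arcWalk_edges σ _ _ hf
      rw [val_add_nat, Nat.mod_eq_of_lt (by omega)]
      omega
  -- two cycles through e
  have heP1 : e ∉ W1.pathify.edges := by
    intro h
    have := hW1b _ (edges_pathify_sub _ h)
    omega
  have heP2 : e ∉ W2.pathify.edges := by
    intro h
    rcases hW2b _ (edges_pathify_sub _ h) with h' | h' <;> omega
  obtain ⟨S1, hS1, heS1, hsub1⟩ :=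
    exists_cycle_through hends_e W1.pathify (isPath_pathify _) heP1
  obtain ⟨S2, hS2, heS2, hsub2⟩ :=
    exists_cycle_through hends_e W2.pathify (isPath_pathify _) heP2
  obtain ⟨S₀, hS₀, huniq⟩ := hcac.2 e
  have hS1S2 : S1 = S2 := (huniq S1 ⟨hS1, heS1⟩).trans (huniq S2 ⟨hS2, heS2⟩).symm
  -- S1 is contained in the middle segment
  have hSbound : ∀ f ∈ S1, b.val ≤ f.val ∧ f.val ≤ c.val - 1 := by
    intro f hf
    have h1 := hsub1 f hf
    have h2 := hsub2 f (hS1S2 ▸ hf)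
    have hb1 : f = e ∨ (a.val ≤ f.val ∧ f.val < c.val - 1) := by
      rcases h1 with h | h
      · exact Or.inl h
      · exact Or.inr (hW1b _ (edges_pathify_sub _ h))
    have hb2 : f = e ∨ (c.val ≤ f.val ∧ f.val < d.val) ∨ (b.val ≤ f.val ∧ f.val < c.val - 1) := by
      rcases h2 with h | h
      · exact Or.inl h
      · exact Or.inr (hW2b _ (edges_pathify_sub _ h))
    rcases hb1 with rfl | hb1'
    · omega
    · rcases hb2 with rfl | hb2' | hb2'
      · omega
      · omega
      · omega
  -- extract a spanning relation from the closed walk of S1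
  obtain ⟨v1, w1, hne1, hnd1, hvc1, hto1⟩ := hS1
  have hew1 : e ∈ w1.edges := by rw [← List.mem_toFinset, hto1]; exact heS1
  obtain ⟨A, B, p₁, p₂, hendsE, heqE⟩ := split_at_edge w1 hew1
  have hnd1' := hnd1
  rw [← heqE, List.nodup_append] at hnd1'
  have he1' : e ∉ p₁.edges := fun h => hnd1'.2.2 e h e (by simp) rfl
  have he2' : e ∉ p₂.edges := (List.nodup_cons.1 hnd1'.2.1).1
  set F : Set (Fin n) := {f : Fin n | ¬ (b.val ≤ f.val ∧ f.val + 2 ≤ c.val)} with hFdef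
  have havoidF : ∀ f ∈ (p₂.append p₁).edges, f ∉ F := by
    intro f hf
    rw [edges_append, List.mem_append] at hf
    have hfw : f ∈ w1.edges := by
      rw [← heqE]
      rcases hf with h | h
      · simp [h]
      · simp [h]
    have hfS : f ∈ S1 := by rw [← hto1, List.mem_toFinset]; exact hfw
    have hfne : f ≠ e := by
      rintro rfl
      rcases hf with h | h
      · exact he2' h
      · exact he1' h
    have hfv : f.val ≠ c.val - 1 := by
      intro hv
      exact hfne (Fin.ext (by rw [hv, heval]))
    have hbnd := hSbound f hfS
    intro hmemF
    exact hmemF ⟨hbnd.1, by omega⟩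
  have hreach0 := (p₂.append p₁).toReachAvoid havoidF
  have hq : s(A, B) = s(Quotient.mk σ e, Quotient.mk σ c) := hendsE.symm.trans hends_e
  have hreach : ((cycleGraph n).quot σ).ReachAvoid F (Quotient.mk σ e) (Quotient.mk σ c) := by
    rcases Sym2.eq_iff.1 hq with ⟨h1, h2⟩ | ⟨h1, h2⟩
    · rw [h1] at hreach0; rw [h2] at hreach0; exact hreach0.symm'
    · rw [h1] at hreach0; rw [h2] at hreach0; exact hreach0
  have hspan : ∃ p : Fin n, b.val ≤ p.val ∧ p.val < c.val ∧ σ.r p c := by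
    rcases reach_last σ hreach with heq | ⟨f, hfF, hcase⟩
    · exact ⟨e, by omega, by omega, Quotient.exact heq⟩
    · have hfgood : b.val ≤ f.val ∧ f.val + 2 ≤ c.val := not_not.1 hfF
      rcases hcase with hcf | hcf
      · exact ⟨f, hfgood.1, by omega, Quotient.exact hcf.symm⟩
      · refine ⟨f + 1, ?_, ?_, Quotient.exact hcf.symm⟩ <;>
          rw [hcast1, val_add_nat, Nat.mod_eq_of_lt (by omega)] <;> omega
  obtain ⟨p, hp1, hp2, hpc⟩ := hspan
  by_cases hpb : p = b
  · subst hpb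
    exact nrab (htr rac (hsm hpc))
  · have hbp : b.val < p.val := by
      rcases Nat.eq_or_lt_of_le hp1 with h | h
      · exact absurd (Fin.ext h.symm) hpb
      · exact h
    refine hmin (p.val - b.val) (by omega)
      ⟨a, b, p, d, hab, Fin.lt_def.2 hbp, Fin.lt_def.2 (by omega), htr rac (hsm hpc), rbd, nrab, rfl⟩

end CycleQuot





end Multigraph



/-- Let `C` be the cycle graph of length `n` and `π` a partition of its
vertex set.  The quotient multigraph `C^π` is a cactus iff `π` is non-crossing. -/
theorem stmt_1 (n : ℕ) [NeZero n] (σ : Setoid (Fin n)) :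
    ((cycleGraph n).quot σ).IsCactus ↔ NonCrossingRel σ.r := by
  constructor
  · intro hcac
    by_contra hcr
    exact Multigraph.not_cactus_of_crossing σ hcr hcac
  · exact Multigraph.cactus_of_noncrossing σ
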